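/- arXiv:1906.11758 — 6 statements merged into one kernel-verified Lean document; each statement's English description precedes it below -/
import Mathlib

section
/- Let D' be a class of digraphs containing all finite digraphs whose loop-free part is acyclic (e.g., D' = all finite digraphs). Let R be a finite digraph and E(R) its EV-system with respect to D'. Then for all a, b ∈ E_o(R): there is a proper arc from a to b in E(R) (i.e., (a,b) ∈ A(E(R)) with a ≠ b) if and only if a₁ ∈ b₂ and b₁ ∈ a₃. -/
open Set

structure Dgr where
  V : Type
  [fin : Finite V]
  A : V → V → Prop

def Nin {V : Type} (A : V → V → Prop) (v : V) : Set V := {w | w ≠ v ∧ A w v}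

def Nout {V : Type} (A : V → V → Prop) (v : V) : Set V := {w | w ≠ v ∧ A v w}

def IsHom {V W : Type} (A : V → V → Prop) (B : W → W → Prop) (ξ : V → W) : Prop :=
  ∀ v w, A v w → B (ξ v) (ξ w)

def IsStrictHom {V W : Type} (A : V → V → Prop) (B : W → W → Prop) (ξ : V → W) : Prop :=
  IsHom A B ξ ∧ ∀ v w, A v w → v ≠ w → ξ v ≠ ξ w

abbrev EVtriple (V : Type) := V × Set V × Set V

def EVo {V : Type} (A : V → V → Prop) : Set (EVtriple V) :=
  {a | a.2.1 ⊆ Nin A a.1 ∧ a.2.2 ⊆ Nout A a.1}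

def alphaMap {V W : Type} (A : V → V → Prop) (ξ : V → W) (v : V) : EVtriple W :=
  (ξ v, ξ '' Nin A v, ξ '' Nout A v)

def EVarc (D' : Set Dgr) {V : Type} (A : V → V → Prop) (a b : EVtriple V) : Prop :=
  ∃ G ∈ D', ∃ ξ : G.V → V, IsStrictHom G.A A ξ ∧
    ∃ v w, G.A v w ∧ a = alphaMap G.A ξ v ∧ b = alphaMap G.A ξ w

def Acyclic {V : Type} (A : V → V → Prop) : Prop :=
  ∀ (n : ℕ) (f : ℕ → V), 0 < n → (∀ i < n, A (f i) (f (i+1))) → f 0 ≠ f n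

def IsPoset {V : Type} (A : V → V → Prop) : Prop :=
  (∀ v, A v v) ∧ (∀ v w, A v w → A w v → v = w) ∧ (∀ u v w, A u v → A v w → A u w)

theorem stmt8 (D' : Set Dgr) {V : Type} [Finite V] (A : V → V → Prop)
    (hD : ∀ G : Dgr, Acyclic (fun v w => G.A v w ∧ v ≠ w) → G ∈ D')
    (a b : EVtriple V) (ha : a ∈ EVo A) (hb : b ∈ EVo A) :
    (EVarc D' A a b ∧ a ≠ b) ↔ (a.1 ∈ b.2.1 ∧ b.1 ∈ a.2.2) := by
  constructor
  · rintro ⟨⟨G, _, ξ, hstrict, v, w, hvw, rfl, rfl⟩, hne⟩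
    have hvne : v ≠ w := by rintro rfl; exact hne rfl
    constructor
    · exact ⟨v, ⟨hvne, hvw⟩, rfl⟩
    · exact ⟨w, ⟨fun h => hvne h.symm, hvw⟩, rfl⟩
  · rintro ⟨hab, hba⟩
    obtain ⟨ha1, ha2⟩ := ha
    obtain ⟨hb1, hb2⟩ := hb
    -- basic facts
    have hAab : A a.1 b.1 := (ha2 hba).2
    have hne1 : a.1 ≠ b.1 := fun h => (hb1 hab).1 (h ▸ rfl)
    -- the witness digraph on Fin 6 × V
    set R : (Fin 6 × V) → (Fin 6 × V) → Prop := fun p q =>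
      (p.1 = 2 ∧ p.2 ∈ a.2.1 ∧ q = (0, a.1)) ∨
      (p = (0, a.1) ∧ q.1 = 3 ∧ q.2 ∈ a.2.2 ∧ q.2 ≠ b.1) ∨
      (p = (0, a.1) ∧ q = (1, b.1)) ∨
      (p.1 = 4 ∧ p.2 ∈ b.2.1 ∧ p.2 ≠ a.1 ∧ q = (1, b.1)) ∨
      (p = (1, b.1) ∧ q.1 = 5 ∧ q.2 ∈ b.2.2) with hR
    set r : (Fin 6 × V) → ℕ := fun p =>
      if p.1 = 2 then 0 else if p.1 = 0 ∨ p.1 = 4 then 1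
      else if p.1 = 1 ∨ p.1 = 3 then 2 else 3 with hr
    have hstep : ∀ p q, R p q → r p < r q := by
      intro p q hpq
      simp only [hr]
      rcases hpq with ⟨h1, _, rfl⟩ | ⟨rfl, h1, _⟩ | ⟨rfl, rfl⟩ | ⟨h1, _, _, rfl⟩ | ⟨rfl, h1, _⟩
      · simp [h1]
      · simp [h1]
      · simp
      · simp [h1]
      · simp [h1]
    have hacyc : Acyclic R := by
      intro n f hn hf
      have key : ∀ i ≤ n, 0 < i → r (f 0) < r (f i) := by
        intro i hi
        induction i with
        | zero => omega
        | succ j ih =>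
          intro _
          have hj : R (f j) (f (j+1)) := hf j (by omega)
          rcases Nat.eq_zero_or_pos j with h0 | h0
          · subst h0; exact hstep _ _ hj
          · exact lt_trans (ih (by omega) h0) (hstep _ _ hj)
      intro heq
      have := key n (le_refl n) hn
      rw [heq] at this
      exact lt_irrefl _ this
    set G : Dgr := ⟨Fin 6 × V, R⟩ with hG
    have hGmem : G ∈ D' := by
      apply hD
      intro n f hn hf heq
      exact hacyc n f hn (fun i hi => (hf i hi).1) heq
    refine ⟨⟨G, hGmem, Prod.snd, ?_, (0, a.1), (1, b.1), ?_, ?_, ?_⟩, ?_⟩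
    · constructor
      · intro p q hpq
        rcases hpq with ⟨h1, h2, rfl⟩ | ⟨rfl, h1, h2, h3⟩ | ⟨rfl, rfl⟩ | ⟨h1, h2, h3, rfl⟩ | ⟨rfl, h1, h2⟩
        · exact (ha1 h2).2
        · exact (ha2 h2).2
        · exact hAab
        · exact (hb1 h2).2
        · exact (hb2 h2).2
      · intro p q hpq _
        rcases hpq with ⟨h1, h2, rfl⟩ | ⟨rfl, h1, h2, h3⟩ | ⟨rfl, rfl⟩ | ⟨h1, h2, h3, rfl⟩ | ⟨rfl, h1, h2⟩
        · exact (ha1 h2).1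
        · exact fun h => (ha2 h2).1 h.symm
        · exact hne1
        · exact (hb1 h2).1
        · exact fun h => (hb2 h2).1 h.symm
    · -- R (0,a.1) (1,b.1)
      right; right; left; exact ⟨rfl, rfl⟩
    · -- a = alphaMap
      have hin : Prod.snd '' Nin R ((0 : Fin 6), a.1) = a.2.1 := by
        ext x
        constructor
        · rintro ⟨p, ⟨hp1, hp2⟩, rfl⟩
          rcases hp2 with ⟨h1, h2, h⟩ | ⟨rfl, h1, _⟩ | ⟨rfl, h⟩ | ⟨h1, h2, h3, h⟩ | ⟨rfl, h1, _⟩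
          · exact h2
          · exact absurd h1 (by simp)
          · exact absurd (congrArg Prod.fst h) (by simp)
          · exact absurd (congrArg Prod.fst h) (by simp)
          · exact absurd h1 (by simp)
        · intro hx
          refine ⟨(2, x), ⟨?_, Or.inl ⟨rfl, hx, rfl⟩⟩, rfl⟩
          intro h
          exact absurd (congrArg Prod.fst h) (by simp)
      have hout : Prod.snd '' Nout R ((0 : Fin 6), a.1) = a.2.2 := by
        ext x
        constructor
        · rintro ⟨p, ⟨hp1, hp2⟩, rfl⟩
          rcases hp2 with ⟨h1, h2, h⟩ | ⟨_, h1, h2, h3⟩ | ⟨_, rfl⟩ | ⟨h1, h2, h3, h⟩ | ⟨h, h1, _⟩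
          · exact absurd h1 (by simp)
          · exact h2
          · exact hba
          · exact absurd h1 (by simp)
          · exact absurd (congrArg Prod.fst h) (by simp)
        · intro hx
          by_cases hxb : x = b.1
          · refine ⟨(1, b.1), ⟨?_, Or.inr (Or.inr (Or.inl ⟨rfl, rfl⟩))⟩, hxb.symm⟩
            intro h
            exact absurd (congrArg Prod.fst h) (by simp)
          · refine ⟨(3, x), ⟨?_, Or.inr (Or.inl ⟨rfl, rfl, hx, hxb⟩)⟩, rfl⟩
            intro h
            exact absurd (congrArg Prod.fst h) (by simp)
      show a = (_, _, _)
      rw [hin, hout]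
    · -- b = alphaMap
      have hin : Prod.snd '' Nin R ((1 : Fin 6), b.1) = b.2.1 := by
        ext x
        constructor
        · rintro ⟨p, ⟨hp1, hp2⟩, rfl⟩
          rcases hp2 with ⟨h1, h2, h⟩ | ⟨rfl, h1, _⟩ | ⟨rfl, h⟩ | ⟨h1, h2, h3, h⟩ | ⟨rfl, h1, _⟩
          · exact absurd (congrArg Prod.fst h) (by simp)
          · exact absurd h1 (by simp)
          · exact hab
          · exact h2
          · exact absurd h1 (by simp)
        · intro hx
          by_cases hxa : x = a.1
          · refine ⟨(0, a.1), ⟨?_, Or.inr (Or.inr (Or.inl ⟨rfl, rfl⟩))⟩, hxa.symm⟩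
            intro h
            exact absurd (congrArg Prod.fst h) (by simp)
          · refine ⟨(4, x), ⟨?_, Or.inr (Or.inr (Or.inr (Or.inl ⟨rfl, hx, hxa, rfl⟩)))⟩, rfl⟩
            intro h
            exact absurd (congrArg Prod.fst h) (by simp)
      have hout : Prod.snd '' Nout R ((1 : Fin 6), b.1) = b.2.2 := by
        ext x
        constructor
        · rintro ⟨p, ⟨hp1, hp2⟩, rfl⟩
          rcases hp2 with ⟨h1, h2, h⟩ | ⟨h, h1, h2, h3⟩ | ⟨h, rfl⟩ | ⟨h1, h2, h3, h⟩ | ⟨_, h1, h2⟩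
          · exact absurd h1 (by simp)
          · exact absurd (congrArg Prod.fst h) (by simp)
          · exact absurd (congrArg Prod.fst h) (by simp)
          · exact absurd h1 (by simp)
          · exact h2
        · intro hx
          refine ⟨(5, x), ⟨?_, Or.inr (Or.inr (Or.inr (Or.inr ⟨rfl, rfl, hx⟩)))⟩, rfl⟩
          intro h
          exact absurd (congrArg Prod.fst h) (by simp)
      show b = (_, _, _)
      rw [hin, hout]
    · intro h
      exact hne1 (congrArg Prod.fst h)
end

section
/- Let D' be the class of all finite digraphs, R a finite digraph, and E(R) its EV-system with respect to D'. Then for all a ∈ E_o(R): (a,a) ∈ A(E(R)) if and only if (a₁,a₁) ∈ A(R). -/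
open Set

theorem stmt9 {V : Type} [Finite V] (A : V → V → Prop)
    (a : EVtriple V) (ha : a ∈ EVo A) :
    EVarc Set.univ A a a ↔ A a.1 a.1 := by
  constructor
  · rintro ⟨G, -, ξ, ⟨hhom, hstr⟩, v, w, hvw, hav, haw⟩
    have hξv : ξ v = a.1 := by rw [hav]; rfl
    have hξw : ξ w = a.1 := by rw [haw]; rfl
    have hA := hhom v w hvw
    rw [hξv, hξw] at hA
    exact hA
  · intro hloop
    obtain ⟨hD, hU⟩ := ha
    set r := a.1 with hr
    set D := a.2.1 with hDdef
    set U := a.2.2 with hUdef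
    set B : V → V → Prop := fun x y => (x ∈ D ∧ y = r) ∨ (x = r ∧ y ∈ U) ∨ (x = r ∧ y = r) with hB
    have hNin : Nin B r = D := by
      ext w
      constructor
      · rintro ⟨hne, ⟨hw, -⟩ | ⟨rfl, -⟩ | ⟨rfl, -⟩⟩
        · exact hw
        all_goals exact absurd rfl hne
      · intro hw
        exact ⟨(hD hw).1, Or.inl ⟨hw, rfl⟩⟩
    have hNout : Nout B r = U := by
      ext w
      constructor
      · rintro ⟨hne, ⟨-, rfl⟩ | ⟨-, hw⟩ | ⟨-, rfl⟩⟩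
        · exact absurd rfl hne
        · exact hw
        · exact absurd rfl hne
      · intro hw
        exact ⟨(hU hw).1, Or.inr (Or.inl ⟨rfl, hw⟩)⟩
    refine ⟨Dgr.mk V B, Set.mem_univ _, id, ⟨?_, fun v w _ hne => by simpa using hne⟩,
      r, r, Or.inr (Or.inr ⟨rfl, rfl⟩), ?_, ?_⟩
    · rintro v w (⟨hv, rfl⟩ | ⟨rfl, hw⟩ | ⟨rfl, rfl⟩)
      · exact (hD hv).2
      · exact (hU hw).2
      · exact hloop
    all_goals {
      show a = alphaMap B id r
      simp only [alphaMap, hNin, hNout, Set.image_id]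
      exact Prod.ext hr (Prod.ext hDdef hUdef)
    }
end

section
/- Let P' be the class of finite posets (reflexive antisymmetric transitive digraphs), R ∈ P', and E(R) the EV-system of R with respect to P'. Then for all a, b ∈ E_o(R): there is a proper arc from a to b in E(R) if and only if a₁ ∈ b₂, b₁ ∈ a₃, a₂ ⊆ b₂, and b₃ ⊆ a₃. Moreover, E(R) is itself a poset. -/
open Set

-- alphaMap lands in EVo
lemma mem_EVo_alpha {V W : Type} {A : V → V → Prop} {B : W → W → Prop}
    {ξ : V → W} (h : IsStrictHom A B ξ) (v : V) : alphaMap A ξ v ∈ EVo B := by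
  constructor
  · rintro _ ⟨u, ⟨hne, hu⟩, rfl⟩
    exact ⟨h.2 u v hu hne, h.1 u v hu⟩
  · rintro _ ⟨u, ⟨hne, hu⟩, rfl⟩
    exact ⟨fun e => h.2 v u hu (Ne.symm hne) e.symm, h.1 v u hu⟩

-- forward direction
lemma evarc_props {V : Type} {A : V → V → Prop} (hA : IsPoset A) {a b : EVtriple V}
    (h : EVarc {G : Dgr | IsPoset G.A} A a b) :
    a ∈ EVo A ∧ b ∈ EVo A ∧ (a ≠ b →
      a.1 ∈ b.2.1 ∧ b.1 ∈ a.2.2 ∧ a.2.1 ⊆ b.2.1 ∧ b.2.2 ⊆ a.2.2) := by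
  obtain ⟨G, hG, ξ, hξ, v, w, hvw, ha, hb⟩ := h
  subst ha; subst hb
  refine ⟨mem_EVo_alpha hξ v, mem_EVo_alpha hξ w, fun hne => ?_⟩
  have hvne : v ≠ w := by rintro rfl; exact hne rfl
  obtain ⟨hGr, hGa, hGt⟩ := hG
  refine ⟨⟨v, ⟨hvne, hvw⟩, rfl⟩, ⟨w, ⟨Ne.symm hvne, hvw⟩, rfl⟩, ?_, ?_⟩
  · apply Set.image_mono
    rintro u ⟨hu1, hu2⟩
    refine ⟨fun e => ?_, hGt u v w hu2 hvw⟩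
    exact hvne (hGa v w hvw (e ▸ hu2))
  · apply Set.image_mono
    rintro u ⟨hu1, hu2⟩
    refine ⟨fun e => ?_, hGt v w u hvw hu2⟩
    exact hvne (hGa v w hvw (e ▸ hu2))
-- construction
lemma evarc_of {V : Type} [Finite V] {A : V → V → Prop} (hA : IsPoset A)
    {a b : EVtriple V} (ha : a ∈ EVo A) (hb : b ∈ EVo A)
    (h1 : a.1 ∈ b.2.1) (h2 : b.1 ∈ a.2.2) (h3 : a.2.1 ⊆ b.2.1) (h4 : b.2.2 ⊆ a.2.2) :
    EVarc {G : Dgr | IsPoset G.A} A a b := by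
  obtain ⟨hAr, hAa, hAt⟩ := hA
  obtain ⟨x, Da, Ua⟩ := a
  obtain ⟨y, Db, Ub⟩ := b
  simp only [EVo, Set.mem_setOf_eq] at ha hb h1 h2 h3 h4
  obtain ⟨haD, haU⟩ := ha
  obtain ⟨hbD, hbU⟩ := hb
  have hxDb : x ∈ Db := h1
  have hyUa : y ∈ Ua := h2
  have hxy : x ≠ y := (hbD h1).1
  have hAxy : A x y := (hbD h1).2
  have hxDa : x ∉ Da := fun h => (haD h).1 rfl
  have hxUa : x ∉ Ua := fun h => (haU h).1 rfl
  have hyDb : y ∉ Db := fun h => (hbD h).1 rfl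
  have hyUb : y ∉ Ub := fun h => (hbU h).1 rfl
  have hxUb : x ∉ Ub := fun h => hxUa (h4 h)
  have hyDa : y ∉ Da := fun h => hxy (hAa x y hAxy (haD h).2)
  have hUaDa : ∀ z, z ∈ Ua → z ∉ Da := fun z hz hd =>
    (haU hz).1 (hAa z x (haD hd).2 (haU hz).2)
  have hUbDb : ∀ z, z ∈ Ub → z ∉ Db := fun z hz hd =>
    (hbU hz).1 (hAa z y (hbD hd).2 (hbU hz).2)
  set B : V → V → Prop := fun u w => u = w ∨ (w = x ∧ u ∈ Da) ∨ (w = y ∧ u ∈ Db) ∨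
    (u = x ∧ w ∈ Ua) ∨ (u = y ∧ w ∈ Ub) ∨ (u ∈ Da ∧ w ∈ Ua) ∨ (u ∈ Db ∧ w ∈ Ub)
    with hBdef
  have c1 : ∀ {u w : V}, w = x → u ∈ Da → B u w := fun h h' => Or.inr (Or.inl ⟨h, h'⟩)
  have c2 : ∀ {u w : V}, w = y → u ∈ Db → B u w := fun h h' =>
    Or.inr (Or.inr (Or.inl ⟨h, h'⟩))
  have c3 : ∀ {u w : V}, u = x → w ∈ Ua → B u w := fun h h' =>
    Or.inr (Or.inr (Or.inr (Or.inl ⟨h, h'⟩)))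
  have c4 : ∀ {u w : V}, u = y → w ∈ Ub → B u w := fun h h' =>
    Or.inr (Or.inr (Or.inr (Or.inr (Or.inl ⟨h, h'⟩))))
  have c5 : ∀ {u w : V}, u ∈ Da → w ∈ Ua → B u w := fun h h' =>
    Or.inr (Or.inr (Or.inr (Or.inr (Or.inr (Or.inl ⟨h, h'⟩)))))
  have c6 : ∀ {u w : V}, u ∈ Db → w ∈ Ub → B u w := fun h h' =>
    Or.inr (Or.inr (Or.inr (Or.inr (Or.inr (Or.inr ⟨h, h'⟩)))))
  have hBA : ∀ u w, B u w → A u w := by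
    rintro u w (rfl | ⟨rfl, h⟩ | ⟨rfl, h⟩ | ⟨rfl, h⟩ | ⟨rfl, h⟩ | ⟨h, h'⟩ | ⟨h, h'⟩)
    · exact hAr u
    · exact (haD h).2
    · exact (hbD h).2
    · exact (haU h).2
    · exact (hbU h).2
    · exact hAt u x w (haD h).2 (haU h').2
    · exact hAt u y w (hbD h).2 (hbU h').2
  have hBposet : IsPoset B := by
    refine ⟨fun v => Or.inl rfl, fun v w h h' => ?_, ?_⟩
    · exact hAa v w (hBA v w h) (hBA w v h')
    · rintro u v w huv hvw
      rcases huv with huv1 | ⟨hvx, hu⟩ | ⟨hvy, hu⟩ | ⟨hux, hv⟩ | ⟨huy, hv⟩ | ⟨hu, hv⟩ |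
        ⟨hu, hv⟩
      · rw [huv1]; exact hvw
      · -- v = x, u ∈ Da
        subst hvx
        rcases hvw with hvw1 | ⟨hwx, h⟩ | ⟨hwy, h⟩ | ⟨-, h⟩ | ⟨e, -⟩ | ⟨h, -⟩ | ⟨h, h'⟩
        · exact c1 hvw1.symm hu
        · exact absurd h hxDa
        · exact c2 hwy (h3 hu)
        · exact c5 hu h
        · exact absurd e hxy
        · exact absurd h hxDa
        · exact c5 hu (h4 h')
      · -- v = y, u ∈ Db
        subst hvy
        rcases hvw with hvw1 | ⟨-, h⟩ | ⟨-, h⟩ | ⟨e, -⟩ | ⟨-, h⟩ | ⟨h, -⟩ | ⟨h, -⟩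
        · exact c2 hvw1.symm hu
        · exact absurd h hyDa
        · exact absurd h hyDb
        · exact absurd e.symm hxy
        · exact c6 hu h
        · exact absurd h hyDa
        · exact absurd h hyDb
      · -- u = x, v ∈ Ua
        rcases hvw with hvw1 | ⟨-, h⟩ | ⟨hwy, h⟩ | ⟨e, -⟩ | ⟨e, h⟩ | ⟨h, -⟩ | ⟨h, h'⟩
        · exact c3 hux (hvw1 ▸ hv)
        · exact absurd h (hUaDa v hv)
        · exact c2 hwy (hux.symm ▸ hxDb)
        · exact absurd (e ▸ hv) hxUa
        · exact c3 hux (h4 h)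
        · exact absurd h (hUaDa v hv)
        · exact c3 hux (h4 h')
      · -- u = y, v ∈ Ub
        rcases hvw with hvw1 | ⟨-, h⟩ | ⟨-, h⟩ | ⟨e, -⟩ | ⟨e, -⟩ | ⟨h, -⟩ | ⟨h, -⟩
        · exact c4 huy (hvw1 ▸ hv)
        · exact absurd h (hUaDa v (h4 hv))
        · exact absurd h (hUbDb v hv)
        · exact absurd (e ▸ hv) hxUb
        · exact absurd (e ▸ hv) hyUb
        · exact absurd h (hUaDa v (h4 hv))
        · exact absurd h (hUbDb v hv)
      · -- u ∈ Da, v ∈ Ua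
        rcases hvw with hvw1 | ⟨-, h⟩ | ⟨hwy, h⟩ | ⟨e, -⟩ | ⟨e, h⟩ | ⟨h, -⟩ | ⟨h, h'⟩
        · exact c5 hu (hvw1 ▸ hv)
        · exact absurd h (hUaDa v hv)
        · exact c2 hwy (h3 hu)
        · exact absurd (e ▸ hv) hxUa
        · exact c5 hu (h4 h)
        · exact absurd h (hUaDa v hv)
        · exact c5 hu (h4 h')
      · -- u ∈ Db, v ∈ Ub
        rcases hvw with hvw1 | ⟨-, h⟩ | ⟨-, h⟩ | ⟨e, -⟩ | ⟨e, -⟩ | ⟨h, -⟩ | ⟨h, -⟩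
        · exact c6 hu (hvw1 ▸ hv)
        · exact absurd h (hUaDa v (h4 hv))
        · exact absurd h (hUbDb v hv)
        · exact absurd (e ▸ hv) hxUb
        · exact absurd (e ▸ hv) hyUb
        · exact absurd h (hUaDa v (h4 hv))
        · exact absurd h (hUbDb v hv)
  have hNinx : Nin B x = Da := by
    ext u
    constructor
    · rintro ⟨hne, h | ⟨-, h⟩ | ⟨e, -⟩ | ⟨-, h⟩ | ⟨-, h⟩ | ⟨-, h⟩ | ⟨-, h⟩⟩
      · exact absurd h hne
      · exact h
      · exact absurd e hxy
      · exact absurd h hxUa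
      · exact absurd h hxUb
      · exact absurd h hxUa
      · exact absurd h hxUb
    · exact fun h => ⟨(haD h).1, c1 rfl h⟩
  have hNoutx : Nout B x = Ua := by
    ext w
    constructor
    · rintro ⟨hne, h | ⟨hwx, -⟩ | ⟨hwy, -⟩ | ⟨-, h⟩ | ⟨e, -⟩ | ⟨h, -⟩ | ⟨-, h⟩⟩
      · exact absurd h.symm hne
      · exact absurd hwx hne
      · rw [hwy]; exact hyUa
      · exact h
      · exact absurd e hxy
      · exact absurd h hxDa
      · exact h4 h
    · exact fun h => ⟨(haU h).1, c3 rfl h⟩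
  have hNiny : Nin B y = Db := by
    ext u
    constructor
    · rintro ⟨hne, h | ⟨e, -⟩ | ⟨-, h⟩ | ⟨hux, -⟩ | ⟨-, h⟩ | ⟨h, -⟩ | ⟨-, h⟩⟩
      · exact absurd h hne
      · exact absurd e.symm hxy
      · exact h
      · rw [hux]; exact hxDb
      · exact absurd h hyUb
      · exact h3 h
      · exact absurd h hyUb
    · exact fun h => ⟨(hbD h).1, c2 rfl h⟩
  have hNouty : Nout B y = Ub := by
    ext w
    constructor
    · rintro ⟨hne, h | ⟨-, h⟩ | ⟨hwy, -⟩ | ⟨e, -⟩ | ⟨-, h⟩ | ⟨h, -⟩ | ⟨h, -⟩⟩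
      · exact absurd h.symm hne
      · exact absurd h hyDa
      · exact absurd hwy hne
      · exact absurd e.symm hxy
      · exact h
      · exact absurd h hyDa
      · exact absurd h hyDb
    · exact fun h => ⟨(hbU h).1, c4 rfl h⟩
  refine ⟨⟨V, B⟩, hBposet, id, ⟨fun u w h => hBA u w h, fun _ _ _ h => h⟩, x, y,
    c2 rfl hxDb, ?_, ?_⟩
  · show ((x, Da, Ua) : EVtriple V) = (id x, id '' Nin B x, id '' Nout B x)
    rw [hNinx, hNoutx, Set.image_id, Set.image_id]
    rfl
  · show ((y, Db, Ub) : EVtriple V) = (id y, id '' Nin B y, id '' Nout B y)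
    rw [hNiny, hNouty, Set.image_id, Set.image_id]
    rfl
lemma evarc_refl {V : Type} [Finite V] {A : V → V → Prop} (hA : IsPoset A)
    {a : EVtriple V} (ha : a ∈ EVo A) : EVarc {G : Dgr | IsPoset G.A} A a a := by
  obtain ⟨hAr, hAa, hAt⟩ := hA
  obtain ⟨x, Da, Ua⟩ := a
  simp only [EVo, Set.mem_setOf_eq] at ha
  obtain ⟨haD, haU⟩ := ha
  have hxDa : x ∉ Da := fun h => (haD h).1 rfl
  have hxUa : x ∉ Ua := fun h => (haU h).1 rfl
  have hUaDa : ∀ z, z ∈ Ua → z ∉ Da := fun z hz hd =>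
    (haU hz).1 (hAa z x (haD hd).2 (haU hz).2)
  set B : V → V → Prop := fun u w => u = w ∨ (w = x ∧ u ∈ Da) ∨ (u = x ∧ w ∈ Ua) ∨
    (u ∈ Da ∧ w ∈ Ua) with hBdef
  have c1 : ∀ {u w : V}, w = x → u ∈ Da → B u w := fun h h' => Or.inr (Or.inl ⟨h, h'⟩)
  have c2 : ∀ {u w : V}, u = x → w ∈ Ua → B u w := fun h h' =>
    Or.inr (Or.inr (Or.inl ⟨h, h'⟩))
  have c3 : ∀ {u w : V}, u ∈ Da → w ∈ Ua → B u w := fun h h' =>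
    Or.inr (Or.inr (Or.inr ⟨h, h'⟩))
  have hBA : ∀ u w, B u w → A u w := by
    rintro u w (rfl | ⟨rfl, h⟩ | ⟨rfl, h⟩ | ⟨h, h'⟩)
    · exact hAr u
    · exact (haD h).2
    · exact (haU h).2
    · exact hAt u x w (haD h).2 (haU h').2
  have hBposet : IsPoset B := by
    refine ⟨fun v => Or.inl rfl, fun v w h h' => ?_, ?_⟩
    · exact hAa v w (hBA v w h) (hBA w v h')
    · rintro u v w huv hvw
      rcases huv with huv1 | ⟨hvx, hu⟩ | ⟨hux, hv⟩ | ⟨hu, hv⟩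
      · rw [huv1]; exact hvw
      · subst hvx
        rcases hvw with hvw1 | ⟨-, h⟩ | ⟨-, h⟩ | ⟨h, -⟩
        · exact c1 hvw1.symm hu
        · exact absurd h hxDa
        · exact c3 hu h
        · exact absurd h hxDa
      · rcases hvw with hvw1 | ⟨-, h⟩ | ⟨e, -⟩ | ⟨h, -⟩
        · exact c2 hux (hvw1 ▸ hv)
        · exact absurd h (hUaDa v hv)
        · exact absurd (e ▸ hv) hxUa
        · exact absurd h (hUaDa v hv)
      · rcases hvw with hvw1 | ⟨-, h⟩ | ⟨e, -⟩ | ⟨h, -⟩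
        · exact c3 hu (hvw1 ▸ hv)
        · exact absurd h (hUaDa v hv)
        · exact absurd (e ▸ hv) hxUa
        · exact absurd h (hUaDa v hv)
  have hNinx : Nin B x = Da := by
    ext u
    constructor
    · rintro ⟨hne, h | ⟨-, h⟩ | ⟨-, h⟩ | ⟨-, h⟩⟩
      · exact absurd h hne
      · exact h
      · exact absurd h hxUa
      · exact absurd h hxUa
    · exact fun h => ⟨(haD h).1, c1 rfl h⟩
  have hNoutx : Nout B x = Ua := by
    ext w
    constructor
    · rintro ⟨hne, h | ⟨hwx, -⟩ | ⟨-, h⟩ | ⟨h, -⟩⟩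
      · exact absurd h.symm hne
      · exact absurd hwx hne
      · exact h
      · exact absurd h hxDa
    · exact fun h => ⟨(haU h).1, c2 rfl h⟩
  refine ⟨⟨V, B⟩, hBposet, id, ⟨fun u w h => hBA u w h, fun _ _ _ h => h⟩, x, x,
    Or.inl rfl, ?_, ?_⟩ <;>
  · show ((x, Da, Ua) : EVtriple V) = (id x, id '' Nin B x, id '' Nout B x)
    rw [hNinx, hNoutx, Set.image_id, Set.image_id]
    rfl

theorem stmt10 {V : Type} [Finite V] (A : V → V → Prop) (hR : IsPoset A) :
    (∀ a ∈ EVo A, ∀ b ∈ EVo A,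
      (EVarc {G : Dgr | IsPoset G.A} A a b ∧ a ≠ b) ↔
        (a.1 ∈ b.2.1 ∧ b.1 ∈ a.2.2 ∧ a.2.1 ⊆ b.2.1 ∧ b.2.2 ⊆ a.2.2)) ∧
    (∀ a ∈ EVo A, EVarc {G : Dgr | IsPoset G.A} A a a) ∧
    (∀ a b : EVtriple V, EVarc {G : Dgr | IsPoset G.A} A a b →
      EVarc {G : Dgr | IsPoset G.A} A b a → a = b) ∧
    (∀ a b c : EVtriple V, EVarc {G : Dgr | IsPoset G.A} A a b →
      EVarc {G : Dgr | IsPoset G.A} A b c → EVarc {G : Dgr | IsPoset G.A} A a c) := by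
  refine ⟨?_, ?_, ?_, ?_⟩
  · intro a ha b hb
    constructor
    · rintro ⟨h, hne⟩
      exact (evarc_props hR h).2.2 hne
    · rintro ⟨h1, h2, h3, h4⟩
      have hne : a ≠ b := by
        rintro rfl
        exact (ha.1 h1).1 rfl
      exact ⟨evarc_of hR ha hb h1 h2 h3 h4, hne⟩
  · exact fun a ha => evarc_refl hR ha
  · intro a b hab hba
    by_contra hne
    obtain ⟨ha, hb, hp⟩ := evarc_props hR hab
    obtain ⟨-, -, hp'⟩ := evarc_props hR hba
    obtain ⟨h1, h2, h3, h4⟩ := hp hne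
    obtain ⟨h1', h2', h3', h4'⟩ := hp' (Ne.symm hne)
    exact (ha.1 (h3' h1)).1 rfl
  · intro a b c hab hbc
    by_cases hab' : a = b
    · exact hab' ▸ hbc
    by_cases hbc' : b = c
    · exact hbc' ▸ hab
    obtain ⟨ha, hb, hp⟩ := evarc_props hR hab
    obtain ⟨-, hc, hp'⟩ := evarc_props hR hbc
    obtain ⟨h1, h2, h3, h4⟩ := hp hab'
    obtain ⟨h1', h2', h3', h4'⟩ := hp' hbc'
    exact evarc_of hR ha hc (h3' h1) (h4 h2') (h3.trans h3') (h4'.trans h4)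
end

section
/- Let R, S be finite digraphs and ε : E(R) → E(S) a strict homomorphism between their EV-systems with respect to a class D'. Fix a ∈ E_o(R) and assume: (i) |ε(a)₂| ≤ |a₂| and |ε(a)₃| ≤ |a₃|; (ii) for all b, c ∈ N^in_{E(R)}(a), ε(b)₁ = ε(c)₁ implies b₁ = c₁, and for all b, c ∈ N^out_{E(R)}(a), ε(b)₁ = ε(c)₁ implies b₁ = c₁. Then for every G ∈ D', strict ξ : G → R, and v ∈ V(G) with α^R_ξ(v) = a, the induced map η(ξ) = φ_S ∘ ε ∘ α^R_ξ satisfies α^S_{η(ξ)}(v) = ε(a), i.e., (η(ξ)(v), η(ξ)[N^in_G(v)], η(ξ)[N^out_G(v)]) = ε(a). -/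
open Set

lemma ncard_image_le_image' {g V W : Type} [Finite W] (s : Set g) (f : g → V) (k : g → W)
    (hfh : ∀ w ∈ s, ∀ w' ∈ s, k w = k w' → f w = f w') :
    (f '' s).ncard ≤ (k '' s).ncard := by
  classical
  rcases s.eq_empty_or_nonempty with rfl | ⟨w0, hw0⟩
  · simp
  · have : Nonempty g := ⟨w0⟩
    refine Set.ncard_le_ncard_of_injOn (fun x => k (Function.invFunOn f s x)) ?_ ?_ (Set.toFinite _)
    · rintro _ ⟨w, hw, rfl⟩
      exact ⟨Function.invFunOn f s (f w), Function.invFunOn_mem ⟨w, hw, rfl⟩, rfl⟩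
    · rintro x ⟨w, hw, rfl⟩ x' ⟨w', hw', rfl⟩ hxy
      have h1 := Function.invFunOn_mem (f := f) (s := s) ⟨w, hw, rfl⟩
      have h1' := Function.invFunOn_mem (f := f) (s := s) ⟨w', hw', rfl⟩
      have e1 := Function.invFunOn_eq (f := f) (s := s) ⟨w, hw, rfl⟩
      have e1' := Function.invFunOn_eq (f := f) (s := s) ⟨w', hw', rfl⟩
      have := hfh _ h1 _ h1' hxy
      rw [e1, e1'] at this
      exact this

theorem stmt14 (D' : Set Dgr) {V W : Type} [Finite V] [Finite W]
    (A : V → V → Prop) (B : W → W → Prop)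
    (ε : EVtriple V → EVtriple W)
    (hεv : ∀ a ∈ EVo A, ε a ∈ EVo B)
    (hε : IsStrictHom (EVarc D' A) (EVarc D' B) ε)
    (a : EVtriple V) (ha : a ∈ EVo A)
    (hcard2 : (ε a).2.1.ncard ≤ a.2.1.ncard)
    (hcard3 : (ε a).2.2.ncard ≤ a.2.2.ncard)
    (hin : ∀ b ∈ Nin (EVarc D' A) a, ∀ c ∈ Nin (EVarc D' A) a,
      (ε b).1 = (ε c).1 → b.1 = c.1)
    (hout : ∀ b ∈ Nout (EVarc D' A) a, ∀ c ∈ Nout (EVarc D' A) a,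
      (ε b).1 = (ε c).1 → b.1 = c.1) :
    ∀ G ∈ D', ∀ ξ : G.V → V, IsStrictHom G.A A ξ →
      ∀ v : G.V, alphaMap G.A ξ v = a →
        alphaMap G.A (fun u => (ε (alphaMap G.A ξ u)).1) v = ε a := by
  intro G hG ξ hξ v hv
  subst hv
  have _ : Finite G.V := G.fin
  set α := alphaMap G.A ξ with hα
  -- in-neighbors
  have harcIn : ∀ w ∈ Nin G.A v, EVarc D' A (α w) (α v) := by
    intro w hw; exact ⟨G, hG, ξ, hξ, w, v, hw.2, rfl, rfl⟩
  have hneIn : ∀ w ∈ Nin G.A v, α w ≠ α v := by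
    intro w hw h
    exact hξ.2 w v hw.2 hw.1 (congrArg Prod.fst h)
  have hNinMem : ∀ w ∈ Nin G.A v, α w ∈ Nin (EVarc D' A) (α v) :=
    fun w hw => ⟨hneIn w hw, harcIn w hw⟩
  have hsubIn : (fun u => (ε (α u)).1) '' Nin G.A v ⊆ (ε (α v)).2.1 := by
    rintro _ ⟨w, hw, rfl⟩
    show (ε (α w)).1 ∈ (ε (α v)).2.1
    have harc : EVarc D' B (ε (α w)) (ε (α v)) := hε.1 _ _ (harcIn w hw)
    have hne : ε (α w) ≠ ε (α v) := hε.2 _ _ (harcIn w hw) (hneIn w hw)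
    obtain ⟨H, hH, ζ, hζ, p, q, hpq, h1, h2⟩ := harc
    have hpqne : p ≠ q := by rintro rfl; exact hne (h1.trans h2.symm)
    rw [h1, h2]
    exact ⟨p, ⟨hpqne, hpq⟩, rfl⟩
  have hcardIn : (ξ '' Nin G.A v).ncard ≤ ((fun u => (ε (α u)).1) '' Nin G.A v).ncard := by
    refine ncard_image_le_image' (Nin G.A v) ξ (fun u => (ε (α u)).1) ?_
    intro w hw w' hw' hww
    exact hin (α w) (hNinMem w hw) (α w') (hNinMem w' hw') hww
  -- out-neighbors
  have harcOut : ∀ w ∈ Nout G.A v, EVarc D' A (α v) (α w) := by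
    intro w hw; exact ⟨G, hG, ξ, hξ, v, w, hw.2, rfl, rfl⟩
  have hneOut : ∀ w ∈ Nout G.A v, α w ≠ α v := by
    intro w hw h
    exact hξ.2 v w hw.2 (Ne.symm hw.1) (congrArg Prod.fst h).symm
  have hNoutMem : ∀ w ∈ Nout G.A v, α w ∈ Nout (EVarc D' A) (α v) :=
    fun w hw => ⟨hneOut w hw, harcOut w hw⟩
  have hsubOut : (fun u => (ε (α u)).1) '' Nout G.A v ⊆ (ε (α v)).2.2 := by
    rintro _ ⟨w, hw, rfl⟩
    show (ε (α w)).1 ∈ (ε (α v)).2.2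
    have harc : EVarc D' B (ε (α v)) (ε (α w)) := hε.1 _ _ (harcOut w hw)
    have hne : ε (α v) ≠ ε (α w) := hε.2 _ _ (harcOut w hw) (hneOut w hw).symm
    obtain ⟨H, hH, ζ, hζ, p, q, hpq, h1, h2⟩ := harc
    have hpqne : q ≠ p := by rintro rfl; exact hne (h1.trans h2.symm)
    rw [h2, h1]
    exact ⟨q, ⟨hpqne, hpq⟩, rfl⟩
  have hcardOut : (ξ '' Nout G.A v).ncard ≤ ((fun u => (ε (α u)).1) '' Nout G.A v).ncard := by
    refine ncard_image_le_image' (Nout G.A v) ξ (fun u => (ε (α u)).1) ?_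
    intro w hw w' hw' hww
    exact hout (α w) (hNoutMem w hw) (α w') (hNoutMem w' hw') hww
  have e2 : (fun u => (ε (α u)).1) '' Nin G.A v = (ε (α v)).2.1 :=
    Set.eq_of_subset_of_ncard_le hsubIn (hcard2.trans hcardIn) (Set.toFinite _)
  have e3 : (fun u => (ε (α u)).1) '' Nout G.A v = (ε (α v)).2.2 :=
    Set.eq_of_subset_of_ncard_le hsubOut (hcard3.trans hcardOut) (Set.toFinite _)
  show ((ε (α v)).1, (fun u => (ε (α u)).1) '' Nin G.A v,
      (fun u => (ε (α u)).1) '' Nout G.A v) = ε (α v)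
  rw [e2, e3]
end

section
/- For the two-element chain C with V(C) = {0,1} and A(C) = {(0,0),(0,1),(1,1)}, and a finite connected flat poset R (every element is minimal or maximal, considered as a reflexive digraph), the map ε : E_o(R) → E_o(C) defined by ε(a) = (0, ∅, {1}) if a₃ ≠ ∅, ε(a) = (1, {0}, ∅) if a₂ ≠ ∅, and ε(a) = (0, ∅, ∅) otherwise, is a well-defined map into E_o(C) and a strict homomorphism from E(R) to E(C) (EV-systems with respect to the class of finite posets). -/
open Set

lemma aux_noboth {V W : Type} {A : V → V → Prop} {B : W → W → Prop}
    (hflat : ∀ v : W, (∀ u, B u v → u = v) ∨ (∀ u, B v u → u = v))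
    {ξ : V → W} (hξ : IsStrictHom A B ξ)
    {x u z : V} (hu : u ∈ Nin A x) (hz : z ∈ Nout A x) : False := by
  obtain ⟨hu1, hu2⟩ := hu
  obtain ⟨hz1, hz2⟩ := hz
  have h1 : B (ξ u) (ξ x) := hξ.1 _ _ hu2
  have h2 : B (ξ x) (ξ z) := hξ.1 _ _ hz2
  have n1 : ξ u ≠ ξ x := hξ.2 _ _ hu2 hu1
  have n2 : ξ x ≠ ξ z := hξ.2 _ _ hz2 (Ne.symm hz1)
  rcases hflat (ξ x) with h | h
  · exact n1 (h _ h1)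
  · exact n2 ((h _ h2).symm)

open scoped Classical in
lemma aux_main {V : Type} {A : V → V → Prop}
    (hflat : ∀ v : V, (∀ u, A u v → u = v) ∨ (∀ u, A v u → u = v))
    (G : Dgr) (ξ : G.V → V) (hξ : IsStrictHom G.A A ξ) :
    ∃ η : G.V → Fin 2, IsStrictHom G.A (fun x y : Fin 2 => x ≤ y) η ∧
      ∀ v : G.V,
        (if (ξ '' Nout G.A v) ≠ ∅ then
            ((0 : Fin 2), (∅ : Set (Fin 2)), ({1} : Set (Fin 2)))
          else if (ξ '' Nin G.A v) ≠ ∅ then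
            ((1 : Fin 2), ({0} : Set (Fin 2)), (∅ : Set (Fin 2)))
          else ((0 : Fin 2), (∅ : Set (Fin 2)), (∅ : Set (Fin 2))))
        = alphaMap G.A η v := by
  set η : G.V → Fin 2 := fun x =>
    if Nout G.A x ≠ ∅ then 0 else if Nin G.A x ≠ ∅ then 1 else 0 with hη
  -- value lemmas
  have hval0 : ∀ x : G.V, Nout G.A x ≠ ∅ → η x = 0 := by
    intro x hx; simp [hη, hx]
  have hval1 : ∀ x : G.V, Nin G.A x ≠ ∅ → η x = 1 := by
    intro x hx
    have hout : Nout G.A x = ∅ := by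
      by_contra hne
      obtain ⟨u, hu⟩ := Set.nonempty_iff_ne_empty.2 hx
      obtain ⟨z, hz⟩ := Set.nonempty_iff_ne_empty.2 hne
      exact aux_noboth hflat hξ hu hz
    simp [hη, hout, hx]
  have hmemout : ∀ {x y : G.V}, G.A x y → x ≠ y → y ∈ Nout G.A x := by
    intro x y h hne; exact ⟨Ne.symm hne, h⟩
  have hmemin : ∀ {x y : G.V}, G.A x y → x ≠ y → x ∈ Nin G.A y := by
    intro x y h hne; exact ⟨hne, h⟩
  refine ⟨η, ⟨?_, ?_⟩, ?_⟩
  · intro x y hxy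
    by_cases hxe : x = y
    · subst hxe; exact le_refl _
    · have : η x = 0 := hval0 x (Set.nonempty_iff_ne_empty.1 ⟨y, hmemout hxy hxe⟩)
      rw [this]; exact Fin.zero_le _
  · intro x y hxy hne
    have h0 : η x = 0 := hval0 x (Set.nonempty_iff_ne_empty.1 ⟨y, hmemout hxy hne⟩)
    have h1 : η y = 1 := hval1 y (Set.nonempty_iff_ne_empty.1 ⟨x, hmemin hxy hne⟩)
    rw [h0, h1]; decide
  · intro v
    by_cases hout : Nout G.A v = ∅
    · have himout : ξ '' Nout G.A v = ∅ := by rw [hout]; simp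
      have himout' : η '' Nout G.A v = ∅ := by rw [hout]; simp
      by_cases hin : Nin G.A v = ∅
      · have himin : ξ '' Nin G.A v = ∅ := by rw [hin]; simp
        have himin' : η '' Nin G.A v = ∅ := by rw [hin]; simp
        have hv : η v = 0 := by simp [hη, hout, hin]
        simp [alphaMap, himout, himin, himin', himout', hv]
      · have himin : ξ '' Nin G.A v ≠ ∅ := by
          obtain ⟨u, hu⟩ := Set.nonempty_iff_ne_empty.2 hin
          exact Set.nonempty_iff_ne_empty.1 ⟨ξ u, Set.mem_image_of_mem _ hu⟩
        have hv : η v = 1 := hval1 v hin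
        have himin' : η '' Nin G.A v = {0} := by
          obtain ⟨u0, hu0⟩ := Set.nonempty_iff_ne_empty.2 hin
          ext t
          simp only [Set.mem_image, Set.mem_singleton_iff]
          constructor
          · rintro ⟨u, hu, rfl⟩
            exact hval0 u (Set.nonempty_iff_ne_empty.1 ⟨v, Ne.symm hu.1, hu.2⟩)
          · rintro rfl
            exact ⟨u0, hu0, hval0 u0 (Set.nonempty_iff_ne_empty.1 ⟨v, Ne.symm hu0.1, hu0.2⟩)⟩
        simp [alphaMap, himout, himin, himin', himout', hv]
    · have houtne := Set.nonempty_iff_ne_empty.2 hout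
      obtain ⟨w0, hw0⟩ := houtne
      have himout : ξ '' Nout G.A v ≠ ∅ :=
        Set.nonempty_iff_ne_empty.1 ⟨ξ w0, Set.mem_image_of_mem _ hw0⟩
      have hv : η v = 0 := hval0 v hout
      have hinv : Nin G.A v = ∅ := by
        by_contra hne
        obtain ⟨u, hu⟩ := Set.nonempty_iff_ne_empty.2 hne
        exact aux_noboth hflat hξ hu hw0
      have himin' : η '' Nin G.A v = ∅ := by rw [hinv]; simp
      have himout' : η '' Nout G.A v = {1} := by
        ext t
        simp only [Set.mem_image, Set.mem_singleton_iff]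
        constructor
        · rintro ⟨u, hu, rfl⟩
          exact hval1 u (Set.nonempty_iff_ne_empty.1 ⟨v, Ne.symm hu.1, hu.2⟩)
        · rintro rfl
          exact ⟨w0, hw0, hval1 w0 (Set.nonempty_iff_ne_empty.1 ⟨v, Ne.symm hw0.1, hw0.2⟩)⟩
      simp [alphaMap, himout, himin', himout', hv]

open scoped Classical in
theorem stmt16 {V : Type} [Finite V] (A : V → V → Prop)
    (hpos : IsPoset A)
    (hconn : ∀ v w : V, Relation.ReflTransGen (fun x y => x ≠ y ∧ (A x y ∨ A y x)) v w)
    (hflat : ∀ v : V, (∀ u, A u v → u = v) ∨ (∀ u, A v u → u = v))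
    (ε : EVtriple V → EVtriple (Fin 2))
    (hεdef : ε = fun a =>
      if a.2.2 ≠ ∅ then ((0 : Fin 2), (∅ : Set (Fin 2)), ({1} : Set (Fin 2)))
      else if a.2.1 ≠ ∅ then ((1 : Fin 2), ({0} : Set (Fin 2)), (∅ : Set (Fin 2)))
      else ((0 : Fin 2), (∅ : Set (Fin 2)), (∅ : Set (Fin 2)))) :
    (∀ a ∈ EVo A, ε a ∈ EVo (fun x y : Fin 2 => x ≤ y)) ∧
    IsStrictHom (EVarc {G : Dgr | IsPoset G.A} A)
      (EVarc {G : Dgr | IsPoset G.A} (fun x y : Fin 2 => x ≤ y)) ε := by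
  subst hεdef
  constructor
  · intro a _
    by_cases h3 : a.2.2 ≠ ∅
    · refine (show EVo (fun x y : Fin 2 => x ≤ y) _ from ?_)
      simp only [if_pos h3]
      constructor
      · intro x hx; exact absurd hx (Set.notMem_empty x)
      · intro x hx
        rw [Set.mem_singleton_iff] at hx
        subst hx
        exact ⟨by decide, by decide⟩
    · by_cases h2 : a.2.1 ≠ ∅
      · refine (show EVo (fun x y : Fin 2 => x ≤ y) _ from ?_)
        simp only [if_neg h3, if_pos h2]
        constructor
        · intro x hx
          rw [Set.mem_singleton_iff] at hx
          subst hx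
          exact ⟨by decide, by decide⟩
        · intro x hx; exact absurd hx (Set.notMem_empty x)
      · refine (show EVo (fun x y : Fin 2 => x ≤ y) _ from ?_)
        simp only [if_neg h3, if_neg h2]
        exact ⟨fun x hx => absurd hx (Set.notMem_empty x),
               fun x hx => absurd hx (Set.notMem_empty x)⟩
  · constructor
    · rintro a b ⟨G, hG, ξ, hξ, v, w, hvw, rfl, rfl⟩
      obtain ⟨η, hη, hηval⟩ := aux_main hflat G ξ hξ
      refine ⟨G, hG, η, hη, v, w, hvw, ?_, ?_⟩
      · have := hηval v
        simpa [alphaMap] using this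
      · have := hηval w
        simpa [alphaMap] using this
    · rintro a b ⟨G, hG, ξ, hξ, v, w, hvw, rfl, rfl⟩ hab
      have hvwne : v ≠ w := by
        rintro rfl; exact hab rfl
      have hwout : w ∈ Nout G.A v := ⟨Ne.symm hvwne, hvw⟩
      have hvin : v ∈ Nin G.A w := ⟨hvwne, hvw⟩
      have ha3 : (alphaMap G.A ξ v).2.2 ≠ ∅ :=
        Set.nonempty_iff_ne_empty.1 ⟨ξ w, Set.mem_image_of_mem _ hwout⟩
      have hb3 : (alphaMap G.A ξ w).2.2 = ∅ := by
        have : Nout G.A w = ∅ := by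
          by_contra hne
          obtain ⟨z, hz⟩ := Set.nonempty_iff_ne_empty.2 hne
          exact aux_noboth hflat hξ hvin hz
        simp [alphaMap, this]
      have hb2 : (alphaMap G.A ξ w).2.1 ≠ ∅ :=
        Set.nonempty_iff_ne_empty.1 ⟨ξ v, Set.mem_image_of_mem _ hvin⟩
      simp only [if_pos ha3, if_neg (not_ne_iff.2 hb3), if_pos hb2]
      intro h
      have := congrArg Prod.fst h
      simp at this
end

section
/- Let R be a finite undirected graph whose loop-free part R* contains no cycle of odd length. Let E(R) be the undirected EV-system of R: vertices are pairs (v, D) with v ∈ V(R) and D ⊆ N_R(v), and {a,b} is an edge whenever there exist a finite undirected graph G, a strict homomorphism ξ : G → R, and an edge {v,w} of G with a = (ξ(v), ξ[N_G(v)]) and b = (ξ(w), ξ[N_G(w)]). Then E(R)* contains no cycle of odd length. -/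
open Set

structure UGr where
  V : Type
  [fin : Finite V]
  A : V → V → Prop
  symm : ∀ v w, A v w → A w v

def Nbhd {V : Type} (A : V → V → Prop) (v : V) : Set V := {w | w ≠ v ∧ A v w}

abbrev EVpair (V : Type) := V × Set V

def ualphaMap {V W : Type} (A : V → V → Prop) (ξ : V → W) (v : V) : EVpair W :=
  (ξ v, ξ '' Nbhd A v)

def UEVarc {V : Type} (A : V → V → Prop) (a b : EVpair V) : Prop :=
  ∃ G : UGr, ∃ ξ : G.V → V, IsStrictHom G.A A ξ ∧
    ∃ v w, G.A v w ∧ a = ualphaMap G.A ξ v ∧ b = ualphaMap G.A ξ w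

def OddCycleFree {V : Type} (A : V → V → Prop) : Prop :=
  ∀ (n : ℕ) (f : ℕ → V), Odd n → (∀ i < n, A (f i) (f (i+1))) → f 0 ≠ f n

theorem stmt17 {V : Type} [Finite V] (A : V → V → Prop)
    (hsymm : ∀ v w, A v w → A w v)
    (hR : OddCycleFree (fun v w => A v w ∧ v ≠ w)) :
    OddCycleFree (fun a b : EVpair V => UEVarc A a b ∧ a ≠ b) := by
  intro n f hodd hstep
  have key : ∀ i < n, A (f i).1 (f (i+1)).1 ∧ (f i).1 ≠ (f (i+1)).1 := by
    intro i hi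
    obtain ⟨⟨G, ξ, hξ, v, w, hvw, ha, hb⟩, hne⟩ := hstep i hi
    have h1 : (f i).1 = ξ v := by rw [ha]; rfl
    have h2 : (f (i+1)).1 = ξ w := by rw [hb]; rfl
    have hvw' : v ≠ w := by rintro rfl; exact hne (ha.trans hb.symm)
    exact ⟨by rw [h1, h2]; exact hξ.1 v w hvw,
           by rw [h1, h2]; exact hξ.2 v w hvw hvw'⟩
  have h := hR n (fun i => (f i).1) hodd key
  exact fun heq => h (congrArg Prod.fst heq)
end
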